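/- Minimization over rank-N projections yields the sum of the N lowest eigenvalues (the projection 𝟙_N(A) onto the lowest N eigenvalues minimizes the trace): let A ∈ M_d(ℂ) be Hermitian with eigenvalues (with multiplicity) μ : Fin d → ℝ, and let 1 ≤ N ≤ d. Then the infimum of Re Tr(A·P) over all Hermitian matrices P with P² = P and Tr P = N is attained, and it equals the minimum over all N-element subsets T of Fin d of Σ_{i∈T} μ_i (the sum of the N smallest eigenvalues of A counted with multiplicity). -/

import Mathlib

open Matrix

/-- combinatorial: a point of the polytope dominates the best vertex -/
lemma aux_comb (d N : ℕ) (hN1 : 1 ≤ N) (hNd : N ≤ d) (μ t : Fin d → ℝ)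
    (h0 : ∀ i, 0 ≤ t i) (h1 : ∀ i, t i ≤ 1) (hsum : ∑ i, t i = N) :
    ∃ T : Finset (Fin d), T.card = N ∧ ∑ i ∈ T, μ i ≤ ∑ i, μ i * t i := by
  classical
  set σ := Tuple.sort μ with hσ
  have hmono : Monotone (μ ∘ σ) := Tuple.monotone_sort μ
  set T : Finset (Fin d) := (Finset.univ.filter (fun j : Fin d => (j : ℕ) < N)).image σ with hT
  have hfcard : (Finset.univ.filter (fun j : Fin d => (j : ℕ) < N)).card = N := by
    rw [Finset.card_filter]
    rw [Fin.sum_univ_eq_sum_range (fun j => if j < N then 1 else 0) d]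
    rw [← Finset.sum_filter]
    have : (Finset.range d).filter (fun i => i < N) = Finset.range N := by
      ext i; simp; omega
    simp [this]
  have hcard : T.card = N := by
    rw [hT, Finset.card_image_of_injective _ σ.injective, hfcard]
  have hmem : ∀ i, i ∈ T ↔ ((σ.symm i : Fin d) : ℕ) < N := by
    intro i
    simp only [hT, Finset.mem_image, Finset.mem_filter, Finset.mem_univ, true_and]
    constructor
    · rintro ⟨j, hj, rfl⟩; simpa using hj
    · intro h; exact ⟨σ.symm i, h, σ.apply_symm_apply i⟩
  set M : Fin d := ⟨N - 1, by omega⟩ with hM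
  set c : ℝ := μ (σ M) with hc
  have hle : ∀ i ∈ T, μ i ≤ c := by
    intro i hi
    rw [hmem] at hi
    have : σ.symm i ≤ M := by
      rw [Fin.le_def]; simp [hM]; omega
    have := hmono this
    simpa using this
  have hge : ∀ i ∉ T, c ≤ μ i := by
    intro i hi
    rw [hmem] at hi
    push_neg at hi
    have : M ≤ σ.symm i := by
      rw [Fin.le_def]; simp [hM]; omega
    have := hmono this
    simpa using this
  set s : Fin d → ℝ := fun i => if i ∈ T then 1 else 0 with hs
  have hsums : ∑ i, s i = N := by
    simp only [hs, Finset.sum_ite_mem, Finset.univ_inter, Finset.sum_const, nsmul_eq_mul, mul_one]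
    rw [hcard]
  have hsT : ∑ i ∈ T, μ i = ∑ i, μ i * s i := by
    simp only [hs, mul_ite, mul_one, mul_zero, Finset.sum_ite_mem, Finset.univ_inter]
  have hterm : ∀ i, 0 ≤ (μ i - c) * (t i - s i) := by
    intro i
    by_cases hi : i ∈ T
    · have h1' : t i - s i ≤ 0 := by simp [hs, hi]; linarith [h1 i]
      have h2' : μ i - c ≤ 0 := by linarith [hle i hi]
      have := mul_nonneg (neg_nonneg.2 h2') (neg_nonneg.2 h1')
      nlinarith [this]
    · have h1' : 0 ≤ t i - s i := by simp [hs, hi]; linarith [h0 i]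
      have h2' : 0 ≤ μ i - c := by linarith [hge i hi]
      exact mul_nonneg h2' h1'
  have hexp : ∑ i, (μ i - c) * (t i - s i)
      = (∑ i, μ i * t i) - (∑ i, μ i * s i) - c * ((∑ i, t i) - ∑ i, s i) := by
    simp only [mul_sub, Finset.mul_sum, ← Finset.sum_sub_distrib]
    apply Finset.sum_congr rfl
    intro i _
    ring
  have hpos : 0 ≤ ∑ i, (μ i - c) * (t i - s i) := Finset.sum_nonneg fun i _ => hterm i
  refine ⟨T, hcard, ?_⟩
  rw [hsT]
  rw [hexp, hsum, hsums] at hpos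
  linarith

lemma aux_diag_nonneg {d : ℕ} (Q : Matrix (Fin d) (Fin d) ℂ)
    (hH : Qᴴ = Q) (hI : Q * Q = Q) (i : Fin d) : 0 ≤ (Q i i).re := by
  have h1 : Q i i = ∑ k, (Complex.normSq (Q i k) : ℂ) := by
    conv_lhs => rw [← hI]
    rw [Matrix.mul_apply]
    refine Finset.sum_congr rfl fun k _ => ?_
    have hk : Q k i = star (Q i k) := by
      conv_lhs => rw [← hH]
      simp [Matrix.conjTranspose_apply]
    rw [hk]
    simp [Complex.mul_conj]
  rw [h1, Complex.re_sum]
  apply Finset.sum_nonneg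
  intro k _
  simp [Complex.normSq_nonneg]

/-- **Minimization over rank-`N` projections yields the sum of the `N` lowest eigenvalues**:
for a Hermitian matrix `A` with eigenvalues `μ`, the infimum of `Re Tr(A P)` over Hermitian
idempotents `P` of trace `N` is attained and equals the minimum over `N`-element subsets `T`
of `Fin d` of `Σ_{i∈T} μ_i`. -/
theorem min_trace_over_projections (d N : ℕ) (hN1 : 1 ≤ N) (hNd : N ≤ d)
    (A : Matrix (Fin d) (Fin d) ℂ) (hA : A.IsHermitian) :
    IsLeast {r : ℝ | ∃ P : Matrix (Fin d) (Fin d) ℂ,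
        P.IsHermitian ∧ P * P = P ∧ P.trace = (N : ℂ) ∧ r = ((A * P).trace).re}
      (sInf {s : ℝ | ∃ T : Finset (Fin d), T.card = N ∧ s = ∑ i ∈ T, hA.eigenvalues i}) := by
  classical
  set μ := hA.eigenvalues with hμ
  set U : Matrix (Fin d) (Fin d) ℂ := (hA.eigenvectorUnitary : Matrix (Fin d) (Fin d) ℂ) with hU
  have hU1 : U * star U = 1 := (Matrix.mem_unitaryGroup_iff).mp hA.eigenvectorUnitary.2
  have hU2 : star U * U = 1 := (Matrix.mem_unitaryGroup_iff').mp hA.eigenvectorUnitary.2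
  set Dμ : Matrix (Fin d) (Fin d) ℂ := Matrix.diagonal (fun i => (μ i : ℂ)) with hDμ
  have hAeq : A = U * Dμ * star U := hA.spectral_theorem
  set S2 := {s : ℝ | ∃ T : Finset (Fin d), T.card = N ∧ s = ∑ i ∈ T, μ i} with hS2
  have hS2fin : S2.Finite :=
    Set.Finite.subset (Set.finite_range (fun T : Finset (Fin d) => ∑ i ∈ T, μ i))
      (by rintro s ⟨T, _, rfl⟩; exact ⟨T, rfl⟩)
  have hS2ne : S2.Nonempty := by
    obtain ⟨T, -, hTc⟩ := Finset.exists_subset_card_eq (s := (Finset.univ : Finset (Fin d))) (n := N)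
      (by simpa using hNd)
    exact ⟨_, T, hTc, rfl⟩
  have hbdd : BddBelow S2 := hS2fin.bddBelow
  have key : ∀ X Y : Matrix (Fin d) (Fin d) ℂ,
      (U * X * star U) * (U * Y * star U) = U * (X * Y) * star U := by
    intro X Y
    calc (U * X * star U) * (U * Y * star U)
        = U * (X * ((star U * U) * (Y * star U))) := by simp only [Matrix.mul_assoc]
      _ = U * (X * Y) * star U := by
          rw [hU2, Matrix.one_mul]; simp only [Matrix.mul_assoc]
  have htr : ∀ X : Matrix (Fin d) (Fin d) ℂ, (U * X * star U).trace = X.trace := by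
    intro X
    rw [Matrix.trace_mul_comm, ← Matrix.mul_assoc, hU2, Matrix.one_mul]
  constructor
  · -- membership : the infimum is attained
    obtain ⟨T, hTc, hTs⟩ := hS2ne.csInf_mem hS2fin
    set v : Fin d → ℂ := fun i => if i ∈ T then 1 else 0 with hv
    set D : Matrix (Fin d) (Fin d) ℂ := Matrix.diagonal v with hD
    have hDH : Dᴴ = D := by
      have hsv : star v = v := by
        funext i; simp only [hv, Pi.star_apply]; split <;> simp
      rw [hD, Matrix.diagonal_conjTranspose, hsv]
    have hDD : D * D = D := by
      have hvv : (fun i => v i * v i) = v := by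
        funext i; simp only [hv]; split <;> simp
      rw [hD, Matrix.diagonal_mul_diagonal, hvv]
    refine ⟨U * D * star U, ?_, ?_, ?_, ?_⟩
    · show (U * D * star U)ᴴ = U * D * star U
      simp [Matrix.conjTranspose_mul, Matrix.star_eq_conjTranspose, hDH, Matrix.mul_assoc]
    · rw [key, hDD]
    · rw [htr, hD, Matrix.trace_diagonal]
      simp only [hv, Finset.sum_ite_mem, Finset.univ_inter, Finset.sum_const, nsmul_eq_mul,
        mul_one]
      rw [hTc]
    · rw [hAeq, key, htr, Matrix.diagonal_mul_diagonal, Matrix.trace_diagonal, hTs]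
      simp only [hv, mul_ite, mul_one, mul_zero, Finset.sum_ite_mem, Finset.univ_inter]
      rw [Complex.re_sum]
      simp
  · -- lower bound
    rintro r ⟨P, hPH, hPP, hPtr, rfl⟩
    set Q : Matrix (Fin d) (Fin d) ℂ := star U * P * U with hQ
    have key2 : ∀ X Y : Matrix (Fin d) (Fin d) ℂ,
        (star U * X * U) * (star U * Y * U) = star U * (X * Y) * U := by
      intro X Y
      calc (star U * X * U) * (star U * Y * U)
          = star U * (X * ((U * star U) * (Y * U))) := by simp only [Matrix.mul_assoc]
        _ = star U * (X * Y) * U := by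
            rw [hU1, Matrix.one_mul]; simp only [Matrix.mul_assoc]
    have hQH : Qᴴ = Q := by
      rw [hQ]
      simp [Matrix.conjTranspose_mul, Matrix.star_eq_conjTranspose, hPH.eq, Matrix.mul_assoc]
    have hQQ : Q * Q = Q := by rw [hQ, key2, hPP]
    have htrQ : Q.trace = (N : ℂ) := by
      rw [hQ, Matrix.trace_mul_comm, ← Matrix.mul_assoc, hU1, Matrix.one_mul, hPtr]
    set t : Fin d → ℝ := fun i => (Q i i).re with ht
    have h0 : ∀ i, 0 ≤ t i := fun i => aux_diag_nonneg Q hQH hQQ i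
    have h1 : ∀ i, t i ≤ 1 := by
      intro i
      have hRH : (1 - Q)ᴴ = 1 - Q := by
        rw [Matrix.conjTranspose_sub, hQH, Matrix.conjTranspose_one]
      have hRR : (1 - Q) * (1 - Q) = 1 - Q := by
        rw [sub_mul, mul_sub, mul_sub, hQQ]
        simp only [Matrix.one_mul, Matrix.mul_one]
        abel
      have := aux_diag_nonneg (1 - Q) hRH hRR i
      have hone : ((1 : Matrix (Fin d) (Fin d) ℂ) - Q) i i = 1 - Q i i := by
        simp [Matrix.sub_apply, Matrix.one_apply_eq]
      rw [hone] at this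
      simp only [Complex.sub_re, Complex.one_re] at this
      simp only [ht]
      linarith
    have hsumt : ∑ i, t i = N := by
      have := congrArg Complex.re htrQ
      rw [Matrix.trace] at this
      simp only [Matrix.diag] at this
      rw [Complex.re_sum] at this
      simpa using this
    have htrace : ((A * P).trace).re = ∑ i, μ i * t i := by
      have hAP : A * P = U * (Dμ * Q) * star U := by
        rw [hQ, hAeq]
        simp only [Matrix.mul_assoc, hU1]
        simp only [← Matrix.mul_assoc, hU1]
        simp [Matrix.mul_assoc]
      rw [hAP, htr]
      have : (Dμ * Q).trace = ∑ i, (μ i : ℂ) * Q i i := by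
        rw [Matrix.trace]
        refine Finset.sum_congr rfl fun i _ => ?_
        simp [Matrix.diag, hDμ, Matrix.diagonal_mul]
      rw [this, Complex.re_sum]
      refine Finset.sum_congr rfl fun i _ => ?_
      simp [ht, Complex.mul_re]
    obtain ⟨T, hTc, hTle⟩ := aux_comb d N hN1 hNd μ t h0 h1 hsumt
    have hmem : (∑ i ∈ T, μ i) ∈ S2 := ⟨T, hTc, rfl⟩
    have := csInf_le hbdd hmem
    rw [htrace]
    linarith
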